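/- For the random walk on ℤ with attractive/repulsive force (a_n = a, c_n = c for n ≥ 0 and a_{-n} = c, c_{-n} = a for n ≥ 1), the continued fractions are H = ½(1+c-a+√((1+c-a)²-4c)) and H' = (c/(2a))(1+a-c-√((1+c-a)²-4c)). The inequality H' ≤ H holds if and only if a satisfies: 0 < a ≤ (1-√c)² when 0 < c ≤ 1/4, and 0 < a ≤ (1-2c)/2 when 1/4 ≤ c < 1. -/
import Mathlib


/-- for the random walk on `ℤ` with an attractive or repulsive force,
with `H = ½(1+c-a+√D)` and `H' = (c/(2a))(1+a-c-√D)` where `D = (1+c-a)² - 4c`,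
the inequality `H' ≤ H` holds if and only if `a` lies in the range
`0 < a ≤ (1-√c)²` when `0 < c ≤ 1/4`, and `0 < a ≤ (1-2c)/2` when `1/4 ≤ c < 1`. -/
theorem stmt16
    (a c : ℝ) (ha : 0 < a) (ha1 : a < 1) (hc : 0 < c) (hc1 : c < 1)
    (hac : a + c ≤ 1) (hconv : a ≤ (1 - Real.sqrt c) ^ 2) :
    let D : ℝ := (1 + c - a) ^ 2 - 4 * c
    let H : ℝ := (1 + c - a + Real.sqrt D) / 2
    let H' : ℝ := (c / (2 * a)) * (1 + a - c - Real.sqrt D)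
    (H' ≤ H ↔
      ((0 < c ∧ c ≤ 1 / 4 ∧ 0 < a ∧ a ≤ (1 - Real.sqrt c) ^ 2) ∨
        (1 / 4 ≤ c ∧ c < 1 ∧ 0 < a ∧ a ≤ (1 - 2 * c) / 2))) := by
  intro D H H'
  have hr : Real.sqrt c ^ 2 = c := Real.sq_sqrt hc.le
  have hr0 : 0 ≤ Real.sqrt c := Real.sqrt_nonneg c
  have hD : 0 ≤ D := by
    show 0 ≤ (1 + c - a) ^ 2 - 4 * c
    nlinarith [hr, hr0, hconv]
  set s := Real.sqrt D with hs
  have hs2 : s ^ 2 = D := Real.sq_sqrt hD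
  have hs0 : 0 ≤ s := Real.sqrt_nonneg D
  have hDval : D = (1 - a - c) ^ 2 - 4 * a * c := by
    show (1 + c - a) ^ 2 - 4 * c = _; ring
  have key : H' ≤ H ↔ (c - a) * (1 - a - c) ≤ (a + c) * s := by
    show c / (2 * a) * (1 + a - c - s) ≤ (1 + c - a + s) / 2 ↔ _
    rw [div_mul_eq_mul_div, div_le_div_iff₀ (by linarith) (by norm_num : (0:ℝ) < 2)]
    constructor <;> intro h <;> nlinarith [h]
  rw [key]
  rcases le_or_gt c a with hca | hca
  · have hc4 : c ≤ 1 / 4 := by nlinarith [hr, hr0, hconv]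
    constructor
    · intro _; exact Or.inl ⟨hc, hc4, ha, hconv⟩
    · intro _
      have h1 : (c - a) * (1 - a - c) ≤ 0 :=
        mul_nonpos_of_nonpos_of_nonneg (by linarith) (by linarith)
      have h2 : 0 ≤ (a + c) * s := mul_nonneg (by linarith) hs0
      linarith
  · have h1 : 0 ≤ (c - a) * (1 - a - c) := mul_nonneg (by linarith) (by linarith)
    constructor
    · intro h
      have hsum : a + c ≤ 1 / 2 := by
        nlinarith [mul_self_le_mul_self h1 h, hs2, hDval, mul_pos ha hc]
      by_cases h4 : c ≤ 1 / 4
      · exact Or.inl ⟨hc, h4, ha, hconv⟩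
      · exact Or.inr ⟨le_of_not_ge h4, hc1, ha, by linarith⟩
    · intro h
      have hsum : a + c ≤ 1 / 2 := by
        rcases h with ⟨_, h4, _, _⟩ | ⟨_, _, _, hle⟩
        · linarith
        · linarith
      have h2 : ((c - a) * (1 - a - c)) ^ 2 ≤ ((a + c) * s) ^ 2 := by
        nlinarith [hs2, hDval, mul_nonneg ha.le hc.le]
      calc (c - a) * (1 - a - c) = Real.sqrt (((c - a) * (1 - a - c)) ^ 2) :=
            (Real.sqrt_sq h1).symm
        _ ≤ Real.sqrt (((a + c) * s) ^ 2) := Real.sqrt_le_sqrt h2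
        _ = (a + c) * s := Real.sqrt_sq (mul_nonneg (by linarith) hs0)
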